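/- Fix t > 0 and x, y ∈ [-1,1]. For every n ≥ n₀ with n₀ = ⌊√t/4⌋ + 2, the term a_n(t,x,y) + a_{-n}(t,x,y) is nonpositive, where a_k(t,x,y) = (1/√t)(φ((x-y-4k)/√t) - φ((x+y-2-4k)/√t)). -/

import Mathlib

open Real Set

/-- The standard Gaussian density `φ(u) = e^{-u²/2}/√(2π)`. -/
noncomputable def stdGauss (u : ℝ) : ℝ := Real.exp (-u ^ 2 / 2) / Real.sqrt (2 * π)

/-- The term `a_k(t,x,y) = (1/√t)(φ((x-y-4k)/√t) - φ((x+y-2-4k)/√t))` of the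
image-method series. -/
noncomputable def aTerm (t x y : ℝ) (k : ℤ) : ℝ :=
  (1 / Real.sqrt t) * (stdGauss ((x - y - 4 * k) / Real.sqrt t)
    - stdGauss ((x + y - 2 - 4 * k) / Real.sqrt t))

lemma stdGauss_even (u : ℝ) : stdGauss (-u) = stdGauss u := by
  simp [stdGauss, neg_sq]

lemma hasDerivAt_stdGauss (u : ℝ) :
    HasDerivAt stdGauss (-u * Real.exp (-u ^ 2 / 2) / Real.sqrt (2 * π)) u := by
  have h : HasDerivAt (fun v : ℝ => -v ^ 2 / 2) (-u) u := by
    have := ((hasDerivAt_pow 2 u).neg).div_const 2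
    refine this.congr_deriv ?_
    ring
  have := (h.exp).div_const (Real.sqrt (2 * π))
  refine this.congr_deriv ?_
  ring

lemma deriv_stdGauss :
    deriv stdGauss = fun u => -u * Real.exp (-u ^ 2 / 2) / Real.sqrt (2 * π) := by
  funext u
  exact (hasDerivAt_stdGauss u).deriv

lemma hasDerivAt_deriv_stdGauss (u : ℝ) :
    HasDerivAt (fun u : ℝ => -u * Real.exp (-u ^ 2 / 2) / Real.sqrt (2 * π))
      ((u ^ 2 - 1) * Real.exp (-u ^ 2 / 2) / Real.sqrt (2 * π)) u := by
  have h : HasDerivAt (fun v : ℝ => -v ^ 2 / 2) (-u) u := by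
    have := ((hasDerivAt_pow 2 u).neg).div_const 2
    refine this.congr_deriv ?_
    ring
  have hmul := ((hasDerivAt_neg u).mul h.exp).div_const (Real.sqrt (2 * π))
  refine hmul.congr_deriv ?_
  ring

lemma convexOn_stdGauss : ConvexOn ℝ (Ici (1 : ℝ)) stdGauss := by
  apply convexOn_of_deriv2_nonneg (convex_Ici 1)
  · exact fun u _ => ((hasDerivAt_stdGauss u).differentiableAt).continuousAt.continuousWithinAt
  · exact fun u _ => ((hasDerivAt_stdGauss u).differentiableAt).differentiableWithinAt
  · intro u _
    rw [deriv_stdGauss]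
    exact ((hasDerivAt_deriv_stdGauss u).differentiableAt).differentiableWithinAt
  · intro u hu
    rw [interior_Ici] at hu
    have h2 : deriv (deriv stdGauss) u
        = (u ^ 2 - 1) * Real.exp (-u ^ 2 / 2) / Real.sqrt (2 * π) := by
      rw [deriv_stdGauss]
      exact (hasDerivAt_deriv_stdGauss u).deriv
    show 0 ≤ deriv (deriv stdGauss) u
    rw [h2]
    have h1 : (1 : ℝ) ≤ u := le_of_lt hu
    have : (0:ℝ) ≤ u ^ 2 - 1 := by nlinarith
    positivity

lemma maj {f : ℝ → ℝ} {a b d c : ℝ} (hf : ConvexOn ℝ (Ici (1:ℝ)) f)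
    (ha : 1 ≤ a) (hab : a ≤ b) (hbc : b ≤ c) (had : a ≤ d) (hdc : d ≤ c)
    (hsum : a + c = b + d) : f b + f d ≤ f a + f c := by
  have hac : a ≤ c := hab.trans hbc
  rcases eq_or_lt_of_le hac with h | h
  · have hb : b = a := by linarith
    have hd : d = a := by linarith
    rw [hb, hd, ← h]
  · have hca : c - a ≠ 0 := by linarith
    set L := (c - b) / (c - a) with hL
    have hL0 : 0 ≤ L := div_nonneg (by linarith) (by linarith)
    have hL1 : L ≤ 1 := (div_le_one (by linarith)).mpr (by linarith)
    have hLca : L * (c - a) = c - b := by rw [hL]; field_simp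
    have hb : b = L * a + (1 - L) * c := by nlinarith [hLca]
    have hd : d = (1 - L) * a + L * c := by
      have : d = a + c - b := by linarith
      rw [this, hb]; ring
    have hc' : c ∈ Ici (1:ℝ) := mem_Ici.mpr (ha.trans hac)
    have h1 : f (L • a + (1 - L) • c) ≤ L • f a + (1 - L) • f c :=
      hf.2 (mem_Ici.mpr ha) hc' hL0 (by linarith) (by ring)
    have h2 : f ((1 - L) • a + L • c) ≤ (1 - L) • f a + L • f c :=
      hf.2 (mem_Ici.mpr ha) hc' (by linarith) hL0 (by ring)
    simp only [smul_eq_mul] at h1 h2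
    rw [← hb] at h1
    rw [← hd] at h2
    linarith

theorem paired_term_nonpos {t : ℝ} (ht : 0 < t) {x y : ℝ}
    (hx : x ∈ Icc (-1 : ℝ) 1) (hy : y ∈ Icc (-1 : ℝ) 1) {n : ℕ}
    (hn : ⌊Real.sqrt t / 4⌋₊ + 2 ≤ n) :
    aTerm t x y (n : ℤ) + aTerm t x y (-(n : ℤ)) ≤ 0 := by
  obtain ⟨hx1, hx2⟩ := hx
  obtain ⟨hy1, hy2⟩ := hy
  set s := Real.sqrt t with hsdef
  have hs : 0 < s := Real.sqrt_pos.mpr ht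
  set N : ℝ := (n : ℝ) with hN
  have hNcast : ((⌊s / 4⌋₊ : ℝ) + 2) ≤ N := by
    rw [hN]
    exact_mod_cast hn
  have hfloor : s / 4 < (⌊s / 4⌋₊ : ℝ) + 1 := Nat.lt_floor_add_one _
  -- the four points
  set A := (x + y - 2 + 4 * N) with hA
  set B := (x - y + 4 * N) with hB
  set C := (4 * N + 2 - x - y) with hC
  set D := (4 * N + y - x) with hD
  have hsA : s ≤ A := by rw [hA]; nlinarith
  have h1A : 1 ≤ A / s := (one_le_div hs).mpr hsA
  have hAB : A / s ≤ B / s := (div_le_div_iff_of_pos_right hs).mpr (by rw [hA, hB]; linarith)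
  have hBC : B / s ≤ C / s := (div_le_div_iff_of_pos_right hs).mpr (by rw [hB, hC]; linarith)
  have hAD : A / s ≤ D / s := (div_le_div_iff_of_pos_right hs).mpr (by rw [hA, hD]; linarith)
  have hDC : D / s ≤ C / s := (div_le_div_iff_of_pos_right hs).mpr (by rw [hD, hC]; linarith)
  have hsum : A / s + C / s = B / s + D / s := by
    rw [← add_div, ← add_div, hA, hB, hC, hD]
    ring_nf
  have key := maj convexOn_stdGauss h1A hAB hBC hAD hDC hsum
  -- rewrite the goal
  simp only [aTerm, Int.cast_natCast, Int.cast_neg, ← hsdef]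
  have e1 : (x - y - 4 * N) / s = -(D / s) := by rw [hD]; ring
  have e2 : (x + y - 2 - 4 * N) / s = -(C / s) := by rw [hC]; ring
  have e3 : (x - y - 4 * (-N)) / s = B / s := by rw [hB]; ring
  have e4 : (x + y - 2 - 4 * (-N)) / s = A / s := by rw [hA]; ring
  rw [show ((n : ℝ)) = N from rfl] at *
  rw [e1, e2, e3, e4, stdGauss_even, stdGauss_even]
  have hspos : 0 < 1 / s := by positivity
  nlinarith [key, hspos]
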